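/- Let 1 ≤ p < ∞ and let (m_n) be an unbounded sequence of natural numbers. If a Banach space X contains a complemented copy of (⊕_{n∈ℕ} ℓ_1^{m_n})_{ℓ_p}, then B(X) is not a Grothendieck space. -/

import Mathlib

set_option synthInstance.maxHeartbeats 1000000
set_option maxHeartbeats 1000000

open scoped ENNReal

/-- A Banach space `X` is a Grothendieck space if every weak*-convergent sequence in the
dual space `X*` converges weakly. -/
def IsGrothendieckSpace (X : Type*) [NormedAddCommGroup X] [NormedSpace ℝ X] : Prop :=
  ∀ (f : ℕ → (X →L[ℝ] ℝ)) (g : X →L[ℝ] ℝ),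
    (∀ x : X, Filter.Tendsto (fun n => f n x) Filter.atTop (nhds (g x))) →
    ∀ Φ : (X →L[ℝ] ℝ) →L[ℝ] ℝ,
      Filter.Tendsto (fun n => Φ (f n)) Filter.atTop (nhds (Φ g))


namespace Stmt7Aux

open Filter

noncomputable def ulim (𝒰 : Ultrafilter ℕ) (u : ℕ → ℝ) : ℝ :=
  limUnder (𝒰 : Filter ℕ) u

theorem ulim_eq {𝒰 : Ultrafilter ℕ} {u : ℕ → ℝ} {a : ℝ}
    (h : Tendsto u (𝒰 : Filter ℕ) (nhds a)) : ulim 𝒰 u = a :=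
  h.limUnder_eq

theorem ulim_spec {𝒰 : Ultrafilter ℕ} {u : ℕ → ℝ} {C : ℝ}
    (h : ∀ n, |u n| ≤ C) : Tendsto u (𝒰 : Filter ℕ) (nhds (ulim 𝒰 u)) := by
  obtain ⟨a, _, ha⟩ := (isCompact_Icc (a := -C) (b := C)).ultrafilter_le_nhds
    (𝒰.map u) (by
      rw [Ultrafilter.coe_map]
      refine le_principal_iff.mpr (Filter.mem_map.mpr (Filter.univ_mem' fun n => ?_))
      exact abs_le.mp (h n))
  rw [Ultrafilter.coe_map] at ha
  have h2 : Tendsto u (𝒰 : Filter ℕ) (nhds a) := ha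
  rwa [ulim_eq h2]

variable (p : ℝ≥0∞) [Fact (1 ≤ p)] (m : ℕ → ℕ)

/-- the `k`-th unit vector in each block (junk `0` if the block is too small) -/
def eV (k : ℕ) : ∀ n, PiLp 1 (fun _ : Fin (m n) => ℝ) :=
  fun _ => WithLp.toLp 1 (fun j => if (j : ℕ) = k then 1 else 0)

theorem blk_norm_eq_sum' {k : ℕ} (y : PiLp 1 (fun _ : Fin k => ℝ)) :
    ‖y‖ = ∑ j, |y j| := by
  rw [PiLp.norm_eq_sum (by norm_num : 0 < (1 : ℝ≥0∞).toReal)]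
  simp [Real.norm_eq_abs]

theorem norm_eV_le (k n : ℕ) : ‖eV m k n‖ ≤ 1 := by
  rw [blk_norm_eq_sum']
  have : ∀ j : Fin (m n), |eV m k n j| = if (j : ℕ) = k then 1 else 0 := by
    intro j
    simp [eV, apply_ite abs]
  rw [Finset.sum_congr rfl fun j _ => this j, Finset.sum_boole]
  norm_cast
  refine Finset.card_le_one.mpr (fun a ha b hb => Fin.ext ?_) 
  rw [Finset.mem_filter] at ha hb
  rw [ha.2, hb.2]

theorem blk_abs_le' {k : ℕ} (y : PiLp 1 (fun _ : Fin k => ℝ)) (j : Fin k) :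
    |y j| ≤ ‖y‖ := by
  rw [blk_norm_eq_sum']
  exact Finset.single_le_sum (f := fun i => |y i|) (fun i _ => abs_nonneg _)
    (Finset.mem_univ j)

theorem memℓp_of_le' {E : ℕ → Type*} [∀ i, NormedAddCommGroup (E i)] {q : ℝ≥0∞}
    (hq : 0 < q.toReal) (x : lp E q) (g : ∀ i, E i) (h : ∀ n, ‖g n‖ ≤ ‖x n‖) :
    Memℓp g q :=
  memℓp_gen (Summable.of_nonneg_of_le (fun _ => Real.rpow_nonneg (norm_nonneg _) _)
    (fun n => Real.rpow_le_rpow (norm_nonneg _) (h n) hq.le)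
    ((memℓp_gen_iff hq).1 (lp.memℓp x)))

theorem lp_norm_le_of_le' {E : ℕ → Type*} [∀ i, NormedAddCommGroup (E i)] {q : ℝ≥0∞}
    (hq : 0 < q.toReal) (x y : lp E q) (h : ∀ n, ‖y n‖ ≤ ‖x n‖) : ‖y‖ ≤ ‖x‖ := by
  rw [lp.norm_eq_tsum_rpow hq, lp.norm_eq_tsum_rpow hq]
  refine Real.rpow_le_rpow (tsum_nonneg fun n => Real.rpow_nonneg (norm_nonneg _) _) ?_
    (by positivity)
  refine Summable.tsum_le_tsum (fun n => Real.rpow_le_rpow (norm_nonneg _) (h n) hq.le) ?_ ?_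
  · exact (memℓp_gen_iff hq).1 (lp.memℓp y)
  · exact (memℓp_gen_iff hq).1 (lp.memℓp x)

/-- the `n`-th "first basis vector" of the `ℓ_p`-sum. -/
noncomputable def v (n : ℕ) : lp (fun n : ℕ => PiLp 1 (fun _ : Fin (m n) => ℝ)) p :=
  lp.single p n (eV m 0 n)

theorem norm_v_le (hq : 0 < p.toReal) (n : ℕ) : ‖v p m n‖ ≤ 1 := by
  rw [v, lp.norm_single (E := fun n : ℕ => PiLp 1 (fun _ : Fin (m n) => ℝ))
    (ENNReal.toReal_pos_iff.mp hq).1 n (eV m 0 n)]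
  exact norm_eV_le m 0 n

/-- underlying function of the diagonal-shift operator -/
noncomputable def DopFun (k : ℕ) (x : ∀ n, PiLp 1 (fun _ : Fin (m n) => ℝ)) :
    ∀ n, PiLp 1 (fun _ : Fin (m n) => ℝ) :=
  fun n => if h : k < m n then
    x n ⟨0, Nat.lt_of_le_of_lt (Nat.zero_le k) h⟩ • eV m k n else 0

theorem DopFun_norm_le (k : ℕ) (x : ∀ n, PiLp 1 (fun _ : Fin (m n) => ℝ)) (n : ℕ) :
    ‖DopFun m k x n‖ ≤ ‖x n‖ := by
  rw [DopFun]
  split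
  · rename_i h
    rw [norm_smul]
    calc ‖x n ⟨0, _⟩‖ * ‖eV m k n‖ ≤ ‖x n ⟨0, _⟩‖ * 1 := by
          exact mul_le_mul_of_nonneg_left (norm_eV_le m k n) (norm_nonneg _)
      _ = |x n ⟨0, _⟩| := by rw [mul_one, Real.norm_eq_abs]
      _ ≤ ‖x n‖ := blk_abs_le' _ _
  · simpa using norm_nonneg (x n)

/-- the diagonal-shift operator on the `ℓ_p`-sum: sends the first basis vector of
block `n` to the `k`-th one (when it exists). -/
noncomputable def Dop (hq : 0 < p.toReal) (k : ℕ) :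
    lp (fun n : ℕ => PiLp 1 (fun _ : Fin (m n) => ℝ)) p →L[ℝ]
    lp (fun n : ℕ => PiLp 1 (fun _ : Fin (m n) => ℝ)) p :=
  LinearMap.mkContinuous
    { toFun := fun x => ⟨DopFun m k x, memℓp_of_le' hq x _ (DopFun_norm_le m k x)⟩
      map_add' := by
        intro x y
        apply Subtype.ext
        funext n
        show DopFun m k (⇑(x + y)) n = DopFun m k x n + DopFun m k y n
        rw [lp.coeFn_add]
        simp only [DopFun, Pi.add_apply]
        split
        · rw [PiLp.add_apply, add_smul]
        · rw [add_zero]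
      map_smul' := by
        intro r x
        apply Subtype.ext
        funext n
        show DopFun m k (⇑(r • x)) n = r • DopFun m k x n
        rw [lp.coeFn_smul]
        simp only [DopFun, Pi.smul_apply]
        split
        · rw [PiLp.smul_apply, smul_smul, smul_eq_mul]
        · rw [smul_zero] }
    1
    (fun x => by
      rw [one_mul]
      exact lp_norm_le_of_le' hq x _ (DopFun_norm_le m k x))

theorem Dop_norm_le (hq : 0 < p.toReal) (k : ℕ) : ‖Dop p m hq k‖ ≤ 1 :=
  LinearMap.mkContinuous_norm_le _ zero_le_one _

theorem Dop_apply (hq : 0 < p.toReal) (k : ℕ)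
    (x : lp (fun n : ℕ => PiLp 1 (fun _ : Fin (m n) => ℝ)) p) (n : ℕ) :
    (Dop p m hq k x) n = DopFun m k (⇑x) n := rfl

section Main

variable {X : Type*} [NormedAddCommGroup X] [NormedSpace ℝ X]
variable (U : X →L[ℝ] lp (fun n : ℕ => PiLp 1 (fun _ : Fin (m n) => ℝ)) p)
variable (V : (lp (fun n : ℕ => PiLp 1 (fun _ : Fin (m n) => ℝ)) p) →L[ℝ] X)

/-- the matrix coefficients of `U T V` along the first columns of the blocks -/
noncomputable def cc (T : X →L[ℝ] X) (n j : ℕ) : ℝ :=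
  if h : j < m n then (U (T (V (v p m n)))) n ⟨j, h⟩ else 0

theorem cc_sum_le (hq : 0 < p.toReal) (T : X →L[ℝ] X) (n : ℕ) (s : Finset ℕ) :
    ∑ j ∈ s, |cc p m U V T n j| ≤ ‖U‖ * ‖V‖ * ‖T‖ := by
  have h0 : ∀ j ∉ Finset.range (m n), |cc p m U V T n j| = 0 := by
    intro j hj
    rw [Finset.mem_range, not_lt] at hj
    rw [cc, dif_neg (by omega), abs_zero]
  have h1 : ∑ j ∈ s, |cc p m U V T n j| ≤
      ∑ j ∈ Finset.range (m n), |cc p m U V T n j| :=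
    calc ∑ j ∈ s, |cc p m U V T n j|
        = ∑ j ∈ s ∩ Finset.range (m n), |cc p m U V T n j| :=
          (Finset.sum_subset Finset.inter_subset_left (fun j hjs hjn =>
            h0 j (fun hr => hjn (Finset.mem_inter.mpr ⟨hjs, hr⟩)))).symm
      _ ≤ ∑ j ∈ Finset.range (m n), |cc p m U V T n j| :=
          Finset.sum_le_sum_of_subset_of_nonneg Finset.inter_subset_right
            (fun j _ _ => abs_nonneg _)
  have h2 : ∑ j ∈ Finset.range (m n), |cc p m U V T n j| =
      ‖(U (T (V (v p m n)))) n‖ := by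
    rw [blk_norm_eq_sum',
      ← Fin.sum_univ_eq_sum_range (fun j => |cc p m U V T n j|) (m n)]
    refine Finset.sum_congr rfl fun j _ => ?_
    rw [cc, dif_pos j.isLt, Fin.eta]
  have hpne : p ≠ 0 := by
    have h1p : (1 : ℝ≥0∞) ≤ p := Fact.out
    intro h; rw [h] at h1p; simp at h1p
  have h3 : ‖(U (T (V (v p m n)))) n‖ ≤ ‖U (T (V (v p m n)))‖ :=
    lp.norm_apply_le_norm hpne _ n
  have h4 : ‖U (T (V (v p m n)))‖ ≤ ‖U‖ * ‖V‖ * ‖T‖ :=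
    calc ‖U (T (V (v p m n)))‖ ≤ ‖U‖ * ‖T (V (v p m n))‖ := U.le_opNorm _
      _ ≤ ‖U‖ * (‖T‖ * ‖V (v p m n)‖) :=
          mul_le_mul_of_nonneg_left (T.le_opNorm _) (norm_nonneg _)
      _ ≤ ‖U‖ * (‖T‖ * (‖V‖ * ‖v p m n‖)) :=
          mul_le_mul_of_nonneg_left
            (mul_le_mul_of_nonneg_left (V.le_opNorm _) (norm_nonneg _)) (norm_nonneg _)
      _ ≤ ‖U‖ * (‖T‖ * (‖V‖ * 1)) := by
          gcongr
          exact norm_v_le p m hq n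
      _ = ‖U‖ * ‖V‖ * ‖T‖ := by ring
  linarith

theorem cc_abs_le (hq : 0 < p.toReal) (T : X →L[ℝ] X) (n j : ℕ) :
    |cc p m U V T n j| ≤ ‖U‖ * ‖V‖ * ‖T‖ := by
  simpa using cc_sum_le p m U V hq T n {j}

theorem cc_add (T₁ T₂ : X →L[ℝ] X) (n j : ℕ) :
    cc p m U V (T₁ + T₂) n j = cc p m U V T₁ n j + cc p m U V T₂ n j := by
  rw [cc, cc, cc]
  split
  · rw [ContinuousLinearMap.add_apply, map_add, lp.coeFn_add, Pi.add_apply,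
      PiLp.add_apply]
  · rw [add_zero]

theorem cc_smul (r : ℝ) (T : X →L[ℝ] X) (n j : ℕ) :
    cc p m U V (r • T) n j = r * cc p m U V T n j := by
  rw [cc, cc]
  split
  · rw [ContinuousLinearMap.smul_apply, map_smul, lp.coeFn_smul, Pi.smul_apply,
      PiLp.smul_apply, smul_eq_mul]
  · rw [mul_zero]

variable (𝒰 : Ultrafilter ℕ)

/-- ultrafilter limits of the matrix coefficients -/
noncomputable def aa (j : ℕ) (T : X →L[ℝ] X) : ℝ :=
  ulim 𝒰 (fun n => cc p m U V T n j)

theorem aa_tendsto (hq : 0 < p.toReal) (j : ℕ) (T : X →L[ℝ] X) :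
    Tendsto (fun n => cc p m U V T n j) (𝒰 : Filter ℕ)
      (nhds (aa p m U V 𝒰 j T)) :=
  ulim_spec (fun n => cc_abs_le p m U V hq T n j)

theorem aa_sum_le (hq : 0 < p.toReal) (T : X →L[ℝ] X) (s : Finset ℕ) :
    ∑ j ∈ s, |aa p m U V 𝒰 j T| ≤ ‖U‖ * ‖V‖ * ‖T‖ := by
  have ht : Tendsto (fun n => ∑ j ∈ s, |cc p m U V T n j|) (𝒰 : Filter ℕ)
      (nhds (∑ j ∈ s, |aa p m U V 𝒰 j T|)) :=
    tendsto_finset_sum s (fun j _ => (aa_tendsto p m U V 𝒰 hq j T).abs)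
  exact le_of_tendsto ht (Filter.univ_mem' fun n => cc_sum_le p m U V hq T n s)

theorem aa_summable_abs (hq : 0 < p.toReal) (T : X →L[ℝ] X) :
    Summable (fun j => |aa p m U V 𝒰 j T|) :=
  summable_of_sum_range_le (fun _ => abs_nonneg _)
    (fun k => aa_sum_le p m U V 𝒰 hq T (Finset.range k))

theorem aa_summable (hq : 0 < p.toReal) (T : X →L[ℝ] X) :
    Summable (fun j => aa p m U V 𝒰 j T) :=
  (aa_summable_abs p m U V 𝒰 hq T).of_abs

theorem aa_add (hq : 0 < p.toReal) (j : ℕ) (T₁ T₂ : X →L[ℝ] X) :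
    aa p m U V 𝒰 j (T₁ + T₂) = aa p m U V 𝒰 j T₁ + aa p m U V 𝒰 j T₂ := by
  refine ulim_eq ?_
  have := (aa_tendsto p m U V 𝒰 hq j T₁).add (aa_tendsto p m U V 𝒰 hq j T₂)
  refine Tendsto.congr (fun n => (cc_add p m U V T₁ T₂ n j).symm) this

theorem aa_smul (hq : 0 < p.toReal) (j : ℕ) (r : ℝ) (T : X →L[ℝ] X) :
    aa p m U V 𝒰 j (r • T) = r * aa p m U V 𝒰 j T := by
  refine ulim_eq ?_
  have := (aa_tendsto p m U V 𝒰 hq j T).const_mul r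
  refine Tendsto.congr (fun n => (cc_smul p m U V r T n j).symm) this

theorem aa_tail_sum_le (hq : 0 < p.toReal) (T : X →L[ℝ] X) (k : ℕ) :
    ∑' j, |aa p m U V 𝒰 (j + k) T| ≤ ‖U‖ * ‖V‖ * ‖T‖ := by
  refine Summable.tsum_le_of_sum_le ((summable_nat_add_iff k).mpr
    (aa_summable_abs p m U V 𝒰 hq T)) (fun s => ?_)
  have := aa_sum_le p m U V 𝒰 hq T (s.map (addRightEmbedding k))
  rwa [Finset.sum_map] at this

/-- the weak*-null sequence of functionals on `B(X)` -/
noncomputable def ff (hq : 0 < p.toReal) (k : ℕ) : (X →L[ℝ] X) →L[ℝ] ℝ :=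
  LinearMap.mkContinuous
    { toFun := fun T => ∑' j, aa p m U V 𝒰 (j + k) T
      map_add' := by
        intro T₁ T₂
        rw [← Summable.tsum_add ((summable_nat_add_iff k).mpr (aa_summable p m U V 𝒰 hq T₁))
          ((summable_nat_add_iff k).mpr (aa_summable p m U V 𝒰 hq T₂))]
        exact tsum_congr fun j => aa_add p m U V 𝒰 hq (j + k) T₁ T₂
      map_smul' := by
        intro r T
        simp only [RingHom.id_apply, smul_eq_mul, ← tsum_mul_left]
        exact tsum_congr fun j => aa_smul p m U V 𝒰 hq (j + k) r T }
    (‖U‖ * ‖V‖)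
    (fun T => by
      rw [Real.norm_eq_abs]
      have hs : Summable (fun j => |aa p m U V 𝒰 (j + k) T|) :=
        (summable_nat_add_iff k).mpr (aa_summable_abs p m U V 𝒰 hq T)
      calc |∑' j, aa p m U V 𝒰 (j + k) T| ≤ ∑' j, |aa p m U V 𝒰 (j + k) T| := by
            have := norm_tsum_le_tsum_norm
              (f := fun j => aa p m U V 𝒰 (j + k) T) (by simpa [Real.norm_eq_abs] using hs)
            simpa [Real.norm_eq_abs] using this
        _ ≤ ‖U‖ * ‖V‖ * ‖T‖ := aa_tail_sum_le p m U V 𝒰 hq T k)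

theorem ff_apply (hq : 0 < p.toReal) (k : ℕ) (T : X →L[ℝ] X) :
    ff p m U V 𝒰 hq k T = ∑' j, aa p m U V 𝒰 (j + k) T := rfl

theorem ff_tendsto_zero (hq : 0 < p.toReal) (T : X →L[ℝ] X) :
    Tendsto (fun k => ff p m U V 𝒰 hq k T) atTop (nhds 0) := by
  simpa [ff_apply] using tendsto_sum_nat_add (fun j => aa p m U V 𝒰 j T)

/-- the witness operators in `B(X)` -/
noncomputable def WW (hq : 0 < p.toReal) (k : ℕ) : X →L[ℝ] X :=
  V.comp ((Dop p m hq k).comp U)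

theorem WW_norm_le (hq : 0 < p.toReal) (k : ℕ) :
    ‖WW p m U V hq k‖ ≤ ‖V‖ * ‖U‖ := by
  calc ‖WW p m U V hq k‖ ≤ ‖V‖ * ‖(Dop p m hq k).comp U‖ := V.opNorm_comp_le _
    _ ≤ ‖V‖ * (‖Dop p m hq k‖ * ‖U‖) :=
        mul_le_mul_of_nonneg_left ((Dop p m hq k).opNorm_comp_le U) (norm_nonneg _)
    _ ≤ ‖V‖ * (1 * ‖U‖) := by
        gcongr
        exact Dop_norm_le p m hq k
    _ = ‖V‖ * ‖U‖ := by ring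

theorem cc_WW (hUV' : ∀ z, U (V z) = z) (hq : 0 < p.toReal) (k n j : ℕ) :
    cc p m U V (WW p m U V hq k) n j =
      if j < m n ∧ k < m n ∧ j = k then 1 else 0 := by
  rw [cc]
  split
  · rename_i hj
    rw [WW, ContinuousLinearMap.comp_apply, ContinuousLinearMap.comp_apply,
      hUV', hUV', Dop_apply, DopFun]
    split
    · rename_i hk
      rw [v, lp.single_apply_self, PiLp.smul_apply]
      have h0 : eV m 0 n ⟨0, Nat.lt_of_le_of_lt (Nat.zero_le k) hk⟩ = 1 := by simp [eV]
      rw [h0, one_smul]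
      show (if (j : ℕ) = k then (1:ℝ) else 0) = _
      by_cases hjk : j = k
      · rw [if_pos hjk, if_pos ⟨hj, hk, hjk⟩]
      · rw [if_neg hjk, if_neg (by tauto)]
    · rename_i hk
      show (0 : ℝ) = _
      rw [if_neg (by tauto)]
  · rename_i hj
    rw [if_neg (by tauto)]

theorem aa_WW (hUV' : ∀ z, U (V z) = z) (hq : 0 < p.toReal)
    (hS : ∀ k : ℕ, {n | k < m n} ∈ 𝒰) (l k : ℕ) :
    aa p m U V 𝒰 l (WW p m U V hq k) = if l = k then 1 else 0 := by
  refine ulim_eq ?_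
  by_cases hlk : l = k
  · subst hlk
    rw [if_pos rfl]
    refine Tendsto.congr' ?_ tendsto_const_nhds
    filter_upwards [hS l] with n hn
    rw [cc_WW p m U V hUV' hq, if_pos ⟨hn, hn, rfl⟩]
  · rw [if_neg hlk]
    refine Tendsto.congr (fun n => ?_) tendsto_const_nhds
    rw [cc_WW p m U V hUV' hq, if_neg (by tauto)]

theorem ff_WW (hUV' : ∀ z, U (V z) = z) (hq : 0 < p.toReal)
    (hS : ∀ k : ℕ, {n | k < m n} ∈ 𝒰) (j k : ℕ) (hjk : j ≤ k) :
    ff p m U V 𝒰 hq j (WW p m U V hq k) = 1 := by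
  rw [ff_apply]
  have h1 : ∀ i, aa p m U V 𝒰 (i + j) (WW p m U V hq k) =
      if i = k - j then 1 else 0 := by
    intro i
    rw [aa_WW p m U V 𝒰 hUV' hq hS]
    by_cases hi : i = k - j
    · rw [if_pos hi, if_pos (by omega)]
    · rw [if_neg hi, if_neg (by omega)]
  rw [tsum_congr h1, tsum_ite_eq]

/-- the "generalized limit" functional on `B(X)*` -/
noncomputable def Phi (hq : 0 < p.toReal) : ((X →L[ℝ] X) →L[ℝ] ℝ) →L[ℝ] ℝ :=
  LinearMap.mkContinuous
    { toFun := fun g : (X →L[ℝ] X) →L[ℝ] ℝ => ulim 𝒰 (fun k => g (WW p m U V hq k))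
      map_add' := by
        intro g₁ g₂
        refine ulim_eq ?_
        have hb : ∀ (g : (X →L[ℝ] X) →L[ℝ] ℝ) (k : ℕ),
            |g (WW p m U V hq k)| ≤ ‖g‖ * (‖V‖ * ‖U‖) := fun g k => by
          rw [← Real.norm_eq_abs]
          exact (g.le_opNorm _).trans
            (mul_le_mul_of_nonneg_left (WW_norm_le p m U V hq k) (norm_nonneg _))
        simp only [ContinuousLinearMap.add_apply]
        exact (ulim_spec (hb g₁)).add (ulim_spec (hb g₂))
      map_smul' := by
        intro r g
        refine ulim_eq ?_
        have hb : ∀ (g : (X →L[ℝ] X) →L[ℝ] ℝ) (k : ℕ),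
            |g (WW p m U V hq k)| ≤ ‖g‖ * (‖V‖ * ‖U‖) := fun g k => by
          rw [← Real.norm_eq_abs]
          exact (g.le_opNorm _).trans
            (mul_le_mul_of_nonneg_left (WW_norm_le p m U V hq k) (norm_nonneg _))
        simp only [ContinuousLinearMap.coe_smul', Pi.smul_apply, smul_eq_mul,
          RingHom.id_apply]
        exact (ulim_spec (hb g)).const_mul r }
    (‖V‖ * ‖U‖)
    (fun g => by
      have hb : ∀ k : ℕ, |g (WW p m U V hq k)| ≤ ‖g‖ * (‖V‖ * ‖U‖) := fun k => by
        rw [← Real.norm_eq_abs]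
        exact (g.le_opNorm _).trans
          (mul_le_mul_of_nonneg_left (WW_norm_le p m U V hq k) (norm_nonneg _))
      show ‖ulim 𝒰 (fun k => g (WW p m U V hq k))‖ ≤ ‖V‖ * ‖U‖ * ‖g‖
      rw [Real.norm_eq_abs]
      have ht := (ulim_spec (𝒰 := 𝒰) hb).abs
      calc |ulim 𝒰 (fun k => g (WW p m U V hq k))| ≤ ‖g‖ * (‖V‖ * ‖U‖) :=
            le_of_tendsto ht (Filter.univ_mem' hb)
        _ = ‖V‖ * ‖U‖ * ‖g‖ := by ring)

theorem Phi_apply (hq : 0 < p.toReal) (g : (X →L[ℝ] X) →L[ℝ] ℝ) :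
    Phi p m U V 𝒰 hq g = ulim 𝒰 (fun k => g (WW p m U V hq k)) := rfl

end Main

end Stmt7Aux

/-- Let `1 ≤ p < ∞` and let `(m_n)` be an unbounded sequence of natural numbers.  If a
Banach space `X` contains a complemented copy of `(⊕_{n∈ℕ} ℓ_1^{m_n})_{ℓ_p}`, then
`B(X)` is not a Grothendieck space. -/
theorem stmt_7 (p : ℝ≥0∞) [Fact (1 ≤ p)] (hp : p < ⊤)
    (m : ℕ → ℕ) (hm : ∀ C : ℕ, ∃ n, C < m n)
    (X : Type*) [NormedAddCommGroup X] [NormedSpace ℝ X] [CompleteSpace X]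
    (U : X →L[ℝ] (lp (fun n : ℕ => PiLp 1 (fun _ : Fin (m n) => ℝ)) p))
    (V : (lp (fun n : ℕ => PiLp 1 (fun _ : Fin (m n) => ℝ)) p) →L[ℝ] X)
    (hUV : U.comp V =
      ContinuousLinearMap.id ℝ (lp (fun n : ℕ => PiLp 1 (fun _ : Fin (m n) => ℝ)) p)) :
    ¬ IsGrothendieckSpace (X →L[ℝ] X) := by
  intro hG
  have h1p : (1 : ℝ≥0∞) ≤ p := Fact.out
  have hq : 0 < p.toReal :=
    ENNReal.toReal_pos (by intro h; rw [h] at h1p; simp at h1p) hp.ne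
  have hUV' : ∀ z, U (V z) = z := by
    intro z
    have := ContinuousLinearMap.ext_iff.mp hUV z
    simpa using this
  have hFne : (Filter.comap m Filter.atTop).NeBot := by
    refine Filter.comap_neBot (fun t ht => ?_)
    obtain ⟨C, hC⟩ := Filter.mem_atTop_sets.mp ht
    obtain ⟨n, hn⟩ := hm C
    exact ⟨n, hC _ (le_of_lt hn)⟩
  let 𝒰 : Ultrafilter ℕ := @Ultrafilter.of _ (Filter.comap m Filter.atTop) hFne
  have hS : ∀ k : ℕ, {n | k < m n} ∈ 𝒰 := by
    intro k
    have heq : {n | k < m n} = m ⁻¹' (Set.Ioi k) := rfl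
    rw [heq]
    exact (Ultrafilter.of_le _) (Filter.preimage_mem_comap (Filter.Ioi_mem_atTop k))
  have hTail : ∀ j : ℕ, {k | j ≤ k} ∈ 𝒰 := by
    intro j
    refine Filter.mem_of_superset (hS ((Finset.range j).sup m)) ?_
    intro k hk
    simp only [Set.mem_setOf_eq] at hk ⊢
    by_contra hjk
    push_neg at hjk
    have : m k ≤ (Finset.range j).sup m := Finset.le_sup (Finset.mem_range.mpr hjk)
    omega
  have key := hG (fun k => Stmt7Aux.ff p m U V 𝒰 hq k) 0
    (fun T => by simpa using Stmt7Aux.ff_tendsto_zero p m U V 𝒰 hq T)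
    (Stmt7Aux.Phi p m U V 𝒰 hq)
  have hone : ∀ k, Stmt7Aux.Phi p m U V 𝒰 hq (Stmt7Aux.ff p m U V 𝒰 hq k) = 1 := by
    intro j
    rw [Stmt7Aux.Phi_apply]
    refine Stmt7Aux.ulim_eq ?_
    refine Filter.Tendsto.congr' ?_ tendsto_const_nhds
    filter_upwards [hTail j] with k hk
    exact (Stmt7Aux.ff_WW p m U V 𝒰 hUV' hq hS j k hk).symm
  rw [map_zero] at key
  have hconst : Filter.Tendsto (fun _ : ℕ => (1 : ℝ)) Filter.atTop (nhds 0) :=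
    key.congr (fun k => hone k)
  have h01 := tendsto_nhds_unique hconst tendsto_const_nhds
  norm_num at h01
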